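/- Let X₁, ..., X_m be independent nonnegative real random variables with E[X_i²] < ∞ for each i, let S = Σᵢ Xᵢ, and let t > 0. Then P(E[S] − S ≥ t) ≤ exp(−t² / (2 Σᵢ E[Xᵢ²])). -/

import Mathlib

open MeasureTheory ProbabilityTheory

lemma exp_neg_le_quad {x : ℝ} (hx : 0 ≤ x) : Real.exp (-x) ≤ 1 - x + x ^ 2 / 2 := by
  have key : ∀ y : ℝ, HasDerivAt (fun z => 1 - z + z ^ 2 / 2 - Real.exp (-z))
      (-1 + y + Real.exp (-y)) y := by
    intro y
    have h1 := (((hasDerivAt_const y (1:ℝ)).sub (hasDerivAt_id y)).add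
        (((hasDerivAt_pow 2 y)).div_const 2)).sub
        ((Real.hasDerivAt_exp (-y)).comp y ((hasDerivAt_id y).neg))
    refine h1.congr_deriv ?_
    norm_num <;> ring
  have mono : MonotoneOn (fun z => 1 - z + z ^ 2 / 2 - Real.exp (-z)) (Set.Ici 0) := by
    apply monotoneOn_of_deriv_nonneg (convex_Ici 0)
    · exact Continuous.continuousOn (by continuity)
    · intro y _
      exact (key y).differentiableAt.differentiableWithinAt
    · intro y _
      rw [(key y).deriv]
      have := Real.add_one_le_exp (-y)
      linarith
  have h0 := mono Set.self_mem_Ici (Set.mem_Ici.mpr hx) hx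
  simp only [Real.exp_zero] at h0
  norm_num at h0
  linarith

lemma maurer_mgf_bound {Ω : Type*} [MeasurableSpace Ω] (μ : Measure Ω) [IsProbabilityMeasure μ]
    (X : Ω → ℝ) (hm : Measurable X) (hnn : ∀ ω, 0 ≤ X ω)
    (hL2 : Integrable (fun ω => (X ω) ^ 2) μ) {β : ℝ} (hβ : 0 ≤ β) :
    mgf (fun ω => -X ω) μ β ≤
      Real.exp (β ^ 2 * (∫ ω, (X ω) ^ 2 ∂μ) / 2 - β * ∫ ω, X ω ∂μ) := by
  have hintX : Integrable X μ := by
    refine Integrable.mono ((integrable_const (1:ℝ)).add hL2) hm.aestronglyMeasurable ?_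
    filter_upwards with ω
    have h1 := hnn ω
    have : X ω ≤ 1 + X ω ^ 2 := by nlinarith
    simp only [Pi.add_apply, Real.norm_eq_abs]
    rw [abs_of_nonneg h1]
    refine this.trans (le_abs_self _)
  have hintE : Integrable (fun ω => Real.exp (β * -X ω)) μ := by
    refine Integrable.mono (integrable_const (1:ℝ)) ?_ ?_
    · exact (hm.neg.const_mul β).exp.aestronglyMeasurable
    · filter_upwards with ω
      rw [Real.norm_eq_abs, abs_of_nonneg (Real.exp_nonneg _), norm_one]
      rw [Real.exp_le_one_iff]
      have := hnn ω
      nlinarith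
  have hpt : ∀ ω, Real.exp (β * -X ω) ≤ 1 - β * X ω + (β * X ω) ^ 2 / 2 := by
    intro ω
    have := exp_neg_le_quad (x := β * X ω) (mul_nonneg hβ (hnn ω))
    rw [mul_neg]
    exact this
  have hRHSint : Integrable (fun ω => 1 - β * X ω + (β * X ω) ^ 2 / 2) μ := by
    have : Integrable (fun ω => (β * X ω) ^ 2 / 2) μ := by
      have := (hL2.const_mul (β ^ 2)).div_const 2
      refine this.congr ?_
      filter_upwards with ω
      ring
    exact ((integrable_const (1:ℝ)).sub (hintX.const_mul β)).add this
  have hI : mgf (fun ω => -X ω) μ β ≤ ∫ ω, (1 - β * X ω + (β * X ω) ^ 2 / 2) ∂μ := by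
    refine integral_mono hintE hRHSint hpt
  have hIeq : ∫ ω, (1 - β * X ω + (β * X ω) ^ 2 / 2) ∂μ
      = 1 - β * (∫ ω, X ω ∂μ) + β ^ 2 * (∫ ω, (X ω) ^ 2 ∂μ) / 2 := by
    have h2 : Integrable (fun ω => (β * X ω) ^ 2 / 2) μ := by
      have := (hL2.const_mul (β ^ 2)).div_const 2
      refine this.congr ?_
      filter_upwards with ω
      ring
    have hfe : (fun ω => 1 - β * X ω + (β * X ω) ^ 2 / 2)
        = fun ω => (1 - β * X ω) + (β ^ 2 / 2) * (X ω) ^ 2 := by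
      funext ω; ring
    have hbx : Integrable (fun ω => β * X ω) μ := hintX.const_mul β
    have hsub : Integrable (fun ω => 1 - β * X ω) μ := (integrable_const (1:ℝ)).sub hbx
    rw [hfe, integral_add hsub (hL2.const_mul (β ^ 2 / 2)),
      integral_sub (integrable_const (1:ℝ)) hbx,
      integral_const_mul, integral_const_mul]
    simp only [integral_const, probReal_univ, measure_univ, ENNReal.toReal_one, smul_eq_mul, one_mul]
    ring
  rw [hIeq] at hI
  refine hI.trans ?_
  have := Real.add_one_le_exp (β ^ 2 * (∫ ω, (X ω) ^ 2 ∂μ) / 2 - β * ∫ ω, X ω ∂μ)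
  linarith

open Finset in
/-- Maurer's lower-tail bound for sums of independent nonnegative random variables. -/
theorem maurer_bound {Ω : Type*} [MeasurableSpace Ω] (μ : Measure Ω) [IsProbabilityMeasure μ]
    (m : ℕ) (X : Fin m → Ω → ℝ)
    (hmeas : ∀ i, Measurable (X i))
    (hindep : iIndepFun X μ)
    (hnonneg : ∀ i ω, 0 ≤ X i ω)
    (hL2 : ∀ i, Integrable (fun ω => (X i ω) ^ 2) μ)
    (hpos : 0 < ∑ i, ∫ ω, (X i ω) ^ 2 ∂μ)
    (t : ℝ) (ht : 0 < t) :
    (μ {ω | t ≤ (∑ i, ∫ ω', X i ω' ∂μ) - ∑ i, X i ω}).toReal ≤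
      Real.exp (-t ^ 2 / (2 * ∑ i, ∫ ω, (X i ω) ^ 2 ∂μ)) := by
  set V : ℝ := ∑ i, ∫ ω, (X i ω) ^ 2 ∂μ with hV
  set ES : ℝ := ∑ i, ∫ ω', X i ω' ∂μ with hES
  set β : ℝ := t / V with hβdef
  have hβ : 0 < β := div_pos ht hpos
  set Y : Fin m → Ω → ℝ := fun i ω => -X i ω with hY
  have hYmeas : ∀ i, Measurable (Y i) := fun i => (hmeas i).neg
  have hYindep : iIndepFun Y μ :=
    hindep.comp (fun _ => Neg.neg) (fun _ => measurable_neg)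
  have hYint : ∀ i ∈ Finset.univ, Integrable (fun ω => Real.exp (β * Y i ω)) μ := by
    intro i _
    refine Integrable.mono (integrable_const (1:ℝ)) ?_ ?_
    · exact ((hYmeas i).const_mul β).exp.aestronglyMeasurable
    · filter_upwards with ω
      rw [Real.norm_eq_abs, abs_of_nonneg (Real.exp_nonneg _), norm_one,
        Real.exp_le_one_iff]
      have := hnonneg i ω
      simp only [hY, mul_neg]
      nlinarith
  have hint : Integrable (fun ω => Real.exp (β * (∑ i, Y i) ω)) μ :=
    hYindep.integrable_exp_mul_sum hYmeas hYint
  have hset : {ω | t ≤ ES - ∑ i, X i ω} = {ω | t - ES ≤ (∑ i, Y i) ω} := by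
    ext ω
    simp only [Set.mem_setOf_eq, Finset.sum_apply, hY, Finset.sum_neg_distrib]
    constructor <;> intro h <;> linarith
  rw [hset]
  have hcher := measure_ge_le_exp_mul_mgf (X := ∑ i, Y i) (μ := μ) (t := β)
    (t - ES) hβ.le hint
  refine hcher.trans ?_
  have hmgf : mgf (∑ i, Y i) μ β ≤ Real.exp (β ^ 2 * V / 2 - β * ES) := by
    rw [hYindep.mgf_sum hYmeas]
    have hprod : ∏ i, mgf (Y i) μ β ≤
        ∏ i, Real.exp (β ^ 2 * (∫ ω, (X i ω) ^ 2 ∂μ) / 2 - β * ∫ ω, X i ω ∂μ) := by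
      refine Finset.prod_le_prod (fun i _ => mgf_nonneg) (fun i _ => ?_)
      exact maurer_mgf_bound μ (X i) (hmeas i) (hnonneg i) (hL2 i) hβ.le
    refine hprod.trans ?_
    rw [← Real.exp_sum]
    apply le_of_eq
    congr 1
    rw [hV, hES, Finset.mul_sum, Finset.mul_sum, Finset.sum_div, ← Finset.sum_sub_distrib]
  calc Real.exp (-β * (t - ES)) * mgf (∑ i, Y i) μ β
      ≤ Real.exp (-β * (t - ES)) * Real.exp (β ^ 2 * V / 2 - β * ES) := by
        exact mul_le_mul_of_nonneg_left hmgf (Real.exp_nonneg _)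
    _ = Real.exp (-β * t + β ^ 2 * V / 2) := by rw [← Real.exp_add]; ring_nf
    _ = Real.exp (-t ^ 2 / (2 * V)) := by
        congr 1
        rw [hβdef]
        field_simp
        ring
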